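/- Invariance of eigenspaces under the averaged nonlinearity: let P_n be the orthogonal projection onto χ_n in the x-variable and φ = P_n φ (i.e. φ(x,y) = α(y)χ_n(x)). Then P_n^⊥ F_av(φ) = 0 and F_av(φ) = ‖χ_n‖_{L^{2σ+2}}^{2σ+2} |α(y)|^{2σ} α(y) χ_n(x). -/

import Mathlib

open MeasureTheory

/-- The physicists' Hermite polynomial. -/
noncomputable def physHermite (n : ℕ) (z : ℝ) : ℝ :=
  (-1) ^ n * Real.exp (z ^ 2) * iteratedDeriv n (fun t => Real.exp (-t ^ 2)) z

/-- The `n`-th L²-normalized Hermite eigenfunction of `H = -(1/2)∂ₓ² + (1/2)b²x²`. -/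
noncomputable def hermiteFun (b : ℝ) (n : ℕ) (x : ℝ) : ℝ :=
  (Real.sqrt (2 ^ n * n.factorial))⁻¹ * (b / Real.pi) ^ ((1 : ℝ) / 4) *
    Real.exp (-(b * x ^ 2) / 2) * physHermite n (Real.sqrt b * x)


open Polynomial Filter

noncomputable def physP : ℕ → ℝ[X]
  | 0 => 1
  | n + 1 => 2 * X * physP n - derivative (physP n)

lemma physP_natDegree (n : ℕ) : (physP n).natDegree ≤ n := by
  induction n with
  | zero => simp [physP]
  | succ n ih =>
    rw [physP]
    refine (natDegree_sub_le _ _).trans ?_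
    refine max_le ?_ ?_
    · refine (natDegree_mul_le).trans ?_
      have : (2 * X : ℝ[X]).natDegree ≤ 1 := by
        refine (natDegree_mul_le).trans ?_; simp
      omega
    · have := natDegree_derivative_le (physP n)
      omega

lemma physP_coeff_self (n : ℕ) : (physP n).coeff n = 2 ^ n := by
  induction n with
  | zero => simp [physP]
  | succ n ih =>
    rw [physP, coeff_sub]
    have h1 : (2 * X * physP n).coeff (n + 1) = 2 * (physP n).coeff n := by
      rw [mul_assoc, coeff_ofNat_mul, coeff_X_mul]
    have h2 : (derivative (physP n)).coeff (n + 1) = 0 := by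
      apply coeff_eq_zero_of_natDegree_lt
      have := natDegree_derivative_le (physP n)
      have := physP_natDegree n
      omega
    rw [h1, h2, ih]; ring

lemma gauss_hasDerivAt (p : ℝ[X]) (z : ℝ) :
    HasDerivAt (fun t : ℝ => Real.exp (-t ^ 2) * eval t p)
      (Real.exp (-z ^ 2) * eval z (derivative p - 2 * X * p)) z := by
  have h1 : HasDerivAt (fun t : ℝ => Real.exp (-t ^ 2)) (Real.exp (-z ^ 2) * (-2 * z)) z := by
    have := (hasDerivAt_pow 2 z).neg.exp
    convert this using 1
    · rfl
    · norm_num [Pi.neg_apply]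
  have h2 : HasDerivAt (fun t : ℝ => eval t p) (eval z (derivative p)) z :=
    p.hasDerivAt z
  have := h1.fun_mul h2
  refine this.congr_deriv ?_
  simp [eval_mul]
  ring

lemma physHermite_eval (n : ℕ) : physHermite n = fun z => eval z (physP n) := by
  induction n with
  | zero =>
    funext z
    simp [physHermite, physP, ← Real.exp_add]
  | succ n ih =>
    funext z
    have hg : iteratedDeriv n (fun t => Real.exp (-t ^ 2)) =
        fun t => (-1 : ℝ) ^ n * (Real.exp (-t ^ 2) * eval t (physP n)) := by
      funext t
      have := congrFun ih t
      simp only [physHermite] at this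
      have h2 : Real.exp (t ^ 2) ≠ 0 := Real.exp_ne_zero _
      field_simp [← this]
      have hexp : Real.exp (-t ^ 2) * Real.exp (t ^ 2) = 1 := by rw [← Real.exp_add]; simp
      have hsq : ((-1:ℝ) ^ n) * ((-1:ℝ) ^ n) = 1 := by
        rw [← pow_add, ← two_mul, pow_mul]; norm_num
      linear_combination (Real.exp (-t^2) * (-1:ℝ)^n) * this + (-(iteratedDeriv n (fun t => Real.exp (-t^2)) t) * Real.exp (-t^2) *
          Real.exp (t^2)) * hsq + (-(iteratedDeriv n (fun t => Real.exp (-t^2)) t)) * hexp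
    simp only [physHermite, iteratedDeriv_succ, hg]
    rw [deriv_const_mul _ ((gauss_hasDerivAt (physP n) z).differentiableAt)]
    rw [(gauss_hasDerivAt (physP n) z).deriv]
    have hexp : Real.exp (z ^ 2) * Real.exp (-z ^ 2) = 1 := by
      rw [← Real.exp_add]; simp
    have : physP (n + 1) = 2 * X * physP n - derivative (physP n) := rfl
    rw [this]
    simp only [eval_sub, eval_mul, eval_ofNat, eval_X]
    calc (-1:ℝ) ^ (n+1) * Real.exp (z^2) * ((-1)^n * (Real.exp (-z^2) * (eval z (derivative (physP n)) - 2 * z * eval z (physP n))))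
        = ((-1:ℝ)^(n+1) * (-1)^n) * (Real.exp (z^2) * Real.exp (-z^2)) * (eval z (derivative (physP n)) - 2 * z * eval z (physP n)) := by ring
      _ = 2 * z * eval z (physP n) - eval z (derivative (physP n)) := by
          rw [hexp, ← pow_add]
          have : (-1:ℝ) ^ (n + 1 + n) = -1 := by
            have : n + 1 + n = 2 * n + 1 := by ring
            rw [this, pow_succ, pow_mul]
            simp
          rw [this]; ring

lemma integrable_pow_gauss (k : ℕ) :
    Integrable (fun x : ℝ => x ^ k * Real.exp (-x ^ 2)) := by
  have h := integrable_rpow_mul_exp_neg_mul_sq (b := 1) one_pos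
    (s := (k : ℝ)) (lt_of_lt_of_le neg_one_lt_zero (Nat.cast_nonneg k))
  simpa [Real.rpow_natCast] using h

lemma integrable_poly_gauss (p : ℝ[X]) :
    Integrable (fun x : ℝ => eval x p * Real.exp (-x ^ 2)) := by
  have h : (fun x : ℝ => eval x p * Real.exp (-x ^ 2)) =
      fun x => ∑ i ∈ Finset.range (p.natDegree + 1),
        p.coeff i * (x ^ i * Real.exp (-x ^ 2)) := by
    funext x
    rw [eval_eq_sum_range, Finset.sum_mul]
    exact Finset.sum_congr rfl fun i _ => by ring
  rw [h]
  exact integrable_finset_sum _ fun i _ => (integrable_pow_gauss i).const_mul _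

lemma tendsto_pow_gauss_atTop (k : ℕ) :
    Tendsto (fun x : ℝ => x ^ k * Real.exp (-x ^ 2)) atTop (nhds 0) := by
  apply squeeze_zero_norm' (a := fun x : ℝ => x ^ k * Real.exp (-x))
  · filter_upwards [eventually_ge_atTop (1 : ℝ)] with x hx
    have hx0 : (0:ℝ) ≤ x := by linarith
    rw [norm_mul, norm_pow, Real.norm_eq_abs, Real.norm_eq_abs, abs_of_nonneg hx0,
      abs_of_nonneg (Real.exp_pos _).le]
    have : Real.exp (-x ^ 2) ≤ Real.exp (-x) := by
      apply Real.exp_le_exp.mpr; nlinarith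
    exact mul_le_mul_of_nonneg_left this (pow_nonneg hx0 _)
  · exact Real.tendsto_pow_mul_exp_neg_atTop_nhds_zero k

lemma tendsto_poly_gauss_atTop (p : ℝ[X]) :
    Tendsto (fun x : ℝ => eval x p * Real.exp (-x ^ 2)) atTop (nhds 0) := by
  have h : (fun x : ℝ => eval x p * Real.exp (-x ^ 2)) =
      fun x => ∑ i ∈ Finset.range (p.natDegree + 1),
        p.coeff i * (x ^ i * Real.exp (-x ^ 2)) := by
    funext x
    rw [eval_eq_sum_range, Finset.sum_mul]
    exact Finset.sum_congr rfl fun i _ => by ring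
  rw [h]
  have : Tendsto (fun x : ℝ => ∑ i ∈ Finset.range (p.natDegree + 1),
      p.coeff i * (x ^ i * Real.exp (-x ^ 2))) atTop
      (nhds (∑ i ∈ Finset.range (p.natDegree + 1), p.coeff i * 0)) :=
    tendsto_finset_sum _ fun i _ => (tendsto_pow_gauss_atTop i).const_mul _
  simpa using this

lemma tendsto_poly_gauss_atBot (p : ℝ[X]) :
    Tendsto (fun x : ℝ => eval x p * Real.exp (-x ^ 2)) atBot (nhds 0) := by
  have h := (tendsto_poly_gauss_atTop (p.comp (-X))).comp tendsto_neg_atBot_atTop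
  convert h using 1
  funext x
  simp [Function.comp, eval_comp]

lemma gauss_hasDerivAt' (p : ℝ[X]) (z : ℝ) :
    HasDerivAt (fun t : ℝ => eval t p * Real.exp (-t ^ 2))
      (eval z (derivative p - 2 * X * p) * Real.exp (-z ^ 2)) z := by
  have h := gauss_hasDerivAt p z
  simp only [mul_comm] at h ⊢
  convert h using 1

lemma integral_glob_deriv (q : ℝ[X]) :
    ∫ x : ℝ, eval x (derivative q - 2 * X * q) * Real.exp (-x ^ 2) = 0 := by
  set r := derivative q - 2 * X * q with hr
  have hIic := integral_Iic_of_hasDerivAt_of_tendsto' (a := (0:ℝ))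
    (f := fun t => eval t q * Real.exp (-t ^ 2))
    (f' := fun t => eval t r * Real.exp (-t ^ 2))
    (fun x _ => gauss_hasDerivAt' q x) (integrable_poly_gauss r).integrableOn
    (tendsto_poly_gauss_atBot q)
  have hIoi := integral_Ioi_of_hasDerivAt_of_tendsto' (a := (0:ℝ))
    (f := fun t => eval t q * Real.exp (-t ^ 2))
    (f' := fun t => eval t r * Real.exp (-t ^ 2))
    (fun x _ => gauss_hasDerivAt' q x) (integrable_poly_gauss r).integrableOn
    (tendsto_poly_gauss_atTop q)
  have hsplit := intervalIntegral.integral_Iic_add_Ioi (b := (0:ℝ)) (μ := volume)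
    (f := fun t => eval t r * Real.exp (-t ^ 2))
    (integrable_poly_gauss r).integrableOn (integrable_poly_gauss r).integrableOn
  rw [← hsplit, hIic, hIoi]
  ring

noncomputable def Ig (p : ℝ[X]) : ℝ := ∫ x : ℝ, eval x p * Real.exp (-x ^ 2)

lemma Ig_sub (p q : ℝ[X]) : Ig (p - q) = Ig p - Ig q := by
  unfold Ig
  simp_rw [eval_sub, sub_mul]
  exact integral_sub (integrable_poly_gauss p) (integrable_poly_gauss q)

lemma Ig_step (p : ℝ[X]) (n : ℕ) :
    Ig (p * physP (n + 1)) = Ig (derivative p * physP n) := by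
  have key : p * physP (n + 1) = derivative p * physP n -
      (derivative (p * physP n) - 2 * X * (p * physP n)) := by
    rw [show physP (n + 1) = 2 * X * physP n - derivative (physP n) from rfl,
      derivative_mul]
    ring
  rw [key, Ig_sub, show Ig (derivative (p * physP n) - 2 * X * (p * physP n)) = 0 from
    integral_glob_deriv (p * physP n), sub_zero]

lemma Ig_physP_mul (p : ℝ[X]) (n : ℕ) :
    Ig (p * physP n) = Ig ((⇑derivative)^[n] p) := by
  induction n generalizing p with
  | zero => simp [physP]
  | succ n ih => rw [Ig_step, ih, Function.iterate_succ_apply]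

lemma Ig_const (c : ℝ) : Ig (C c) = c * Real.sqrt Real.pi := by
  unfold Ig
  simp only [eval_C]
  rw [MeasureTheory.integral_const_mul]
  have h := integral_gaussian 1
  simp only [neg_mul, one_mul, div_one] at h
  rw [h]

lemma Ig_ortho_le {m n : ℕ} (h : m ≤ n) :
    Ig (physP m * physP n) =
      if m = n then (2 : ℝ) ^ n * n.factorial * Real.sqrt Real.pi else 0 := by
  rw [Ig_physP_mul]
  rcases eq_or_lt_of_le h with rfl | hlt
  · have hdeg : ((⇑derivative)^[m] (physP m)).natDegree = 0 :=
      Nat.le_zero.mp ((natDegree_iterate_derivative _ _).trans (by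
        have := physP_natDegree m; omega))
    have hC := eq_C_of_natDegree_eq_zero hdeg
    have hcoeff : ((⇑derivative)^[m] (physP m)).coeff 0 =
        (m.factorial : ℝ) * 2 ^ m := by
      rw [coeff_iterate_derivative]
      simp [physP_coeff_self m, Nat.descFactorial_self, nsmul_eq_mul]
    rw [hC, hcoeff, Ig_const, if_pos rfl]
    ring
  · rw [iterate_derivative_eq_zero (lt_of_le_of_lt (physP_natDegree m) hlt),
      if_neg (Nat.ne_of_lt hlt)]
    unfold Ig
    simp

lemma Ig_ortho (m n : ℕ) :
    Ig (physP m * physP n) =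
      if m = n then (2 : ℝ) ^ n * n.factorial * Real.sqrt Real.pi else 0 := by
  rcases le_total m n with h | h
  · exact Ig_ortho_le h
  · rw [mul_comm, Ig_ortho_le h]
    rcases eq_or_ne m n with rfl | hne
    · simp
    · rw [if_neg (Ne.symm hne), if_neg hne]


lemma hermiteFun_mul (b : ℝ) (hb : 0 < b) (m n : ℕ) (x : ℝ) :
    hermiteFun b m x * hermiteFun b n x =
      ((Real.sqrt (2 ^ m * m.factorial))⁻¹ * (Real.sqrt (2 ^ n * n.factorial))⁻¹ *
        ((b / Real.pi) ^ ((1:ℝ)/4) * (b / Real.pi) ^ ((1:ℝ)/4))) *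
      (eval (Real.sqrt b * x) (physP m * physP n) *
        Real.exp (-(Real.sqrt b * x) ^ 2)) := by
  have he : Real.exp (-(b * x ^ 2) / 2) * Real.exp (-(b * x ^ 2) / 2)
      = Real.exp (-(Real.sqrt b * x) ^ 2) := by
    rw [← Real.exp_add, mul_pow, Real.sq_sqrt hb.le]
    ring_nf
  simp only [hermiteFun, physHermite_eval, eval_mul]
  calc (Real.sqrt (2 ^ m * m.factorial))⁻¹ * (b / Real.pi) ^ ((1:ℝ)/4) *
        Real.exp (-(b * x ^ 2) / 2) * eval (Real.sqrt b * x) (physP m) *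
        ((Real.sqrt (2 ^ n * n.factorial))⁻¹ * (b / Real.pi) ^ ((1:ℝ)/4) *
        Real.exp (-(b * x ^ 2) / 2) * eval (Real.sqrt b * x) (physP n))
      = ((Real.sqrt (2 ^ m * m.factorial))⁻¹ * (Real.sqrt (2 ^ n * n.factorial))⁻¹ *
        ((b / Real.pi) ^ ((1:ℝ)/4) * (b / Real.pi) ^ ((1:ℝ)/4))) *
        ((eval (Real.sqrt b * x) (physP m) * eval (Real.sqrt b * x) (physP n)) *
        (Real.exp (-(b * x ^ 2) / 2) * Real.exp (-(b * x ^ 2) / 2))) := by ring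
    _ = _ := by rw [he]

lemma hermiteFun_orthonormal (b : ℝ) (hb : 0 < b) (m n : ℕ) :
    ∫ x : ℝ, hermiteFun b m x * hermiteFun b n x =
      if m = n then (1:ℝ) else 0 := by
  have hsb : 0 < Real.sqrt b := Real.sqrt_pos.mpr hb
  simp_rw [hermiteFun_mul b hb m n]
  rw [MeasureTheory.integral_const_mul]
  rw [show (∫ x : ℝ, eval (Real.sqrt b * x) (physP m * physP n) *
      Real.exp (-(Real.sqrt b * x) ^ 2)) =
      |(Real.sqrt b)⁻¹| • ∫ z : ℝ, eval z (physP m * physP n) * Real.exp (-z ^ 2) from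
    MeasureTheory.Measure.integral_comp_mul_left
      (fun z => eval z (physP m * physP n) * Real.exp (-z ^ 2)) (Real.sqrt b)]
  rw [smul_eq_mul, abs_of_nonneg (inv_nonneg.mpr hsb.le),
    show (∫ z : ℝ, eval z (physP m * physP n) * Real.exp (-z ^ 2)) =
      Ig (physP m * physP n) from rfl, Ig_ortho]
  rcases eq_or_ne m n with rfl | hne
  · simp only [if_pos rfl]
    have hs : (0:ℝ) < 2 ^ m * m.factorial := by positivity
    have hinv : (Real.sqrt (2 ^ m * m.factorial))⁻¹ *
        (Real.sqrt (2 ^ m * m.factorial))⁻¹ = ((2:ℝ) ^ m * m.factorial)⁻¹ := by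
      rw [← mul_inv, Real.mul_self_sqrt hs.le]
    have hd : (b / Real.pi) ^ ((1:ℝ)/4) * (b / Real.pi) ^ ((1:ℝ)/4) =
        Real.sqrt b / Real.sqrt Real.pi := by
      rw [← Real.rpow_add (by positivity), show (1:ℝ)/4 + 1/4 = 1/2 by norm_num,
        ← Real.sqrt_eq_rpow, Real.sqrt_div hb.le]
    rw [hinv, hd]
    have hpi : Real.sqrt Real.pi ≠ 0 := by positivity
    field_simp
    simp
  · simp [if_neg hne]

lemma exp_swap_aux {T : ℝ} (hT : 0 < T) (W : ℕ → ℂ) (ι : ℕ → ℂ) (hι : ∀ m, (ι m).re = 0)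
    (hW : Summable fun m => ‖W m‖) :
    ∫ θ in (0:ℝ)..T, ∑' m, W m * Complex.exp (ι m * θ) =
      ∑' m, ∫ θ in (0:ℝ)..T, W m * Complex.exp (ι m * θ) := by
  have hnorm : ∀ m (θ : ℝ), ‖W m * Complex.exp (ι m * θ)‖ = ‖W m‖ := by
    intro m θ
    rw [norm_mul, Complex.norm_exp]
    have : (ι m * (θ:ℂ)).re = 0 := by
      rw [Complex.mul_re, hι m, Complex.ofReal_im]
      ring
    rw [this, Real.exp_zero, mul_one]
  rw [intervalIntegral.integral_of_le hT.le, MeasureTheory.integral_tsum]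
  · exact tsum_congr fun m => (intervalIntegral.integral_of_le hT.le).symm
  · intro m
    exact (continuous_const.mul (Complex.continuous_exp.comp
      (continuous_const.mul Complex.continuous_ofReal))).aestronglyMeasurable
  · have hpt : ∀ m, ∫⁻ θ in Set.Ioc (0:ℝ) T, ‖W m * Complex.exp (ι m * θ)‖₊ =
        (‖W m‖₊ : ENNReal) * ENNReal.ofReal T := by
      intro m
      have : (fun θ : ℝ => (‖W m * Complex.exp (ι m * θ)‖₊ : ENNReal)) =
          fun _ => (‖W m‖₊ : ENNReal) := by
        funext θ
        congr 1
        ext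
        exact hnorm m θ
      rw [this, MeasureTheory.lintegral_const, Measure.restrict_apply_univ,
        Real.volume_Ioc]
      simp
    simp_rw [enorm_eq_nnnorm, hpt]
    rw [ENNReal.tsum_mul_right]
    refine ENNReal.mul_ne_top ?_ ENNReal.ofReal_ne_top
    rw [ENNReal.tsum_coe_ne_top_iff_summable]
    exact NNReal.summable_coe.mp (by simpa [coe_nnnorm] using hW)

lemma exp_integral_ne {b : ℝ} (hb : 0 < b) {m n : ℕ} (hmn : m ≠ n) :
    ∫ θ in (0:ℝ)..(2 * Real.pi / b),
      Complex.exp ((Complex.I * ((b * ((m:ℝ) - (n:ℝ)) : ℝ) : ℂ)) * θ) = 0 := by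
  have hk : ((m:ℝ) - (n:ℝ)) ≠ 0 :=
    sub_ne_zero.mpr (fun h => hmn (Nat.cast_injective h))
  have hc : Complex.I * ((b * ((m:ℝ) - (n:ℝ)) : ℝ) : ℂ) ≠ 0 :=
    mul_ne_zero Complex.I_ne_zero
      (Complex.ofReal_ne_zero.mpr (mul_ne_zero hb.ne' hk))
  rw [integral_exp_mul_complex hc]
  have h1 : Complex.I * ((b * ((m:ℝ) - (n:ℝ)) : ℝ) : ℂ) * ((2 * Real.pi / b : ℝ) : ℂ) =
      ((((m:ℤ) - (n:ℤ)) : ℤ) : ℂ) * (2 * Real.pi * Complex.I) := by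
    have hbC : (b : ℂ) ≠ 0 := Complex.ofReal_ne_zero.mpr hb.ne'
    push_cast
    field_simp
  rw [h1, Complex.exp_int_mul_two_pi_mul_I]
  simp


/-- Invariance of eigenspaces under the averaged nonlinearity (Corollary 1.3 / Section 7):
for `φ(x,y) = α(y)χ_n(x)`, with `U θ = e^{iθH}` given spectrally through the Hermite
eigenbasis, the averaged nonlinearity
`F_av(φ) = (b/2π)∫₀^{2π/b} e^{iθH}(|e^{-iθH}φ|^{2σ} e^{-iθH}φ)dθ` satisfies
`P_n^⊥ F_av(φ) = 0` and `F_av(φ) = ‖χ_n‖_{L^{2σ+2}}^{2σ+2} |α(y)|^{2σ} α(y) χ_n(x)`. -/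
theorem eigenspace_invariance (b : ℝ) (hb : 0 < b) (σ n : ℕ) (α : ℝ → ℂ)
    (U : ℝ → (ℝ → ℂ) → (ℝ → ℂ))
    (hU : ∀ (θ : ℝ) (f : ℝ → ℂ) (x : ℝ), U θ f x = ∑' m : ℕ,
      Complex.exp (Complex.I * (θ : ℂ) * ((b * ((m : ℝ) + 1 / 2) : ℝ) : ℂ)) *
        ((∫ t : ℝ, (hermiteFun b m t : ℂ) * f t) * (hermiteFun b m x : ℂ)))
    (hsum : ∀ x : ℝ, Summable (fun m : ℕ =>
      |∫ t : ℝ, hermiteFun b n t ^ (2 * σ + 1) * hermiteFun b m t| * |hermiteFun b m x|))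
    (y : ℝ) :
    ∃ F : ℝ → ℂ,
      (∀ x : ℝ, F x = ((b / (2 * Real.pi) : ℝ) : ℂ) *
        ∫ θ in (0:ℝ)..(2 * Real.pi / b),
          U θ (fun t => (‖U (-θ) (fun t' => α y * (hermiteFun b n t' : ℂ)) t‖ : ℂ) ^ (2 * σ) *
            U (-θ) (fun t' => α y * (hermiteFun b n t' : ℂ)) t) x) ∧
      (∀ x : ℝ, F x - (∫ t : ℝ, (hermiteFun b n t : ℂ) * F t) * (hermiteFun b n x : ℂ) = 0) ∧
      (∀ x : ℝ, F x = ((∫ t : ℝ, hermiteFun b n t ^ (2 * σ + 2) : ℝ) : ℂ) *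
        (‖α y‖ : ℂ) ^ (2 * σ) * α y * (hermiteFun b n x : ℂ)) := by
  -- abbreviations
  set c : ℂ := α y with hcdef
  -- the coefficient
  set A : ℂ := ((∫ t : ℝ, hermiteFun b n t ^ (2 * σ + 2) : ℝ) : ℂ) *
    (‖α y‖ : ℂ) ^ (2 * σ) * α y with hAdef
  refine ⟨fun x => A * (hermiteFun b n x : ℂ), ?_, ?_, fun x => rfl⟩
  -- the inner products with eigenfunctions
  · -- condition 1 : F equals the averaged nonlinearity
    intro x
    -- Step B : evolution of the eigenstate
    have hB : ∀ (θ : ℝ) (t : ℝ),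
        U (-θ) (fun t' => c * (hermiteFun b n t' : ℂ)) t =
          Complex.exp (Complex.I * ((-θ : ℝ) : ℂ) * ((b * ((n : ℝ) + 1 / 2) : ℝ) : ℂ)) *
            (c * (hermiteFun b n t : ℂ)) := by
      intro θ t
      rw [hU]
      have hint : ∀ m : ℕ, (∫ s : ℝ, (hermiteFun b m s : ℂ) * (c * (hermiteFun b n s : ℂ))) =
          c * (if m = n then (1:ℂ) else 0) := by
        intro m
        have : (fun s : ℝ => (hermiteFun b m s : ℂ) * (c * (hermiteFun b n s : ℂ))) =
            fun s => c * (((hermiteFun b m s * hermiteFun b n s : ℝ)) : ℂ) := by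
          funext s; push_cast; ring
        have hOR : (∫ s : ℝ, ((hermiteFun b m s * hermiteFun b n s : ℝ) : ℂ)) =
            ((∫ s : ℝ, hermiteFun b m s * hermiteFun b n s : ℝ) : ℂ) := integral_ofReal
        rw [this, MeasureTheory.integral_const_mul, hOR, hermiteFun_orthonormal b hb m n]
        split_ifs <;> simp
      rw [tsum_eq_single n]
      · rw [hint n, if_pos rfl, mul_one]
      · intro m hm
        rw [hint m, if_neg hm, mul_zero, zero_mul, mul_zero]
    -- Step C : the inner nonlinear function
    have hInner : ∀ (θ : ℝ) (t : ℝ),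
        (‖U (-θ) (fun t' => c * (hermiteFun b n t' : ℂ)) t‖ : ℂ) ^ (2 * σ) *
          U (-θ) (fun t' => c * (hermiteFun b n t' : ℂ)) t =
        ((‖c‖ : ℂ) ^ (2 * σ) *
          (Complex.exp (Complex.I * ((-θ : ℝ) : ℂ) * ((b * ((n : ℝ) + 1 / 2) : ℝ) : ℂ)) * c)) *
          ((hermiteFun b n t : ℂ)) ^ (2 * σ + 1) := by
      intro θ t
      rw [hB θ t]
      have hexp1 : ‖Complex.exp (Complex.I * ((-θ : ℝ) : ℂ) *
          ((b * ((n : ℝ) + 1 / 2) : ℝ) : ℂ))‖ = 1 := by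
        rw [Complex.norm_exp]
        simp [Complex.mul_re]
      rw [norm_mul, hexp1, one_mul, norm_mul, Complex.norm_real, Real.norm_eq_abs]
      have habs : |hermiteFun b n t| ^ (2 * σ) = hermiteFun b n t ^ (2 * σ) := by
        rw [pow_mul, pow_mul, sq_abs]
      have habsC : ((|hermiteFun b n t| : ℝ) : ℂ) ^ (2 * σ) =
          ((hermiteFun b n t : ℝ) : ℂ) ^ (2 * σ) := by
        rw [← Complex.ofReal_pow, habs, Complex.ofReal_pow]
      push_cast
      rw [mul_pow, habsC]
      ring
    -- Step D : expansion of the evolved nonlinearity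
    have hD : ∀ (θ : ℝ) (m : ℕ) (w : ℂ),
        (∫ t : ℝ, (hermiteFun b m t : ℂ) * (w * ((hermiteFun b n t : ℂ)) ^ (2 * σ + 1))) =
          w * ((∫ t : ℝ, hermiteFun b n t ^ (2 * σ + 1) * hermiteFun b m t : ℝ) : ℂ) := by
      intro θ m w
      have : (fun t : ℝ => (hermiteFun b m t : ℂ) * (w * ((hermiteFun b n t : ℂ)) ^ (2 * σ + 1))) =
          fun t => w * (((hermiteFun b n t ^ (2 * σ + 1) * hermiteFun b m t : ℝ)) : ℂ) := by
        funext t; push_cast; ring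
      have hOR : (∫ t : ℝ, ((hermiteFun b n t ^ (2 * σ + 1) * hermiteFun b m t : ℝ) : ℂ)) =
          ((∫ t : ℝ, hermiteFun b n t ^ (2 * σ + 1) * hermiteFun b m t : ℝ) : ℂ) :=
        integral_ofReal
      rw [this, MeasureTheory.integral_const_mul, hOR]
    -- notation
    set J : ℕ → ℝ := fun m => ∫ t : ℝ, hermiteFun b n t ^ (2 * σ + 1) * hermiteFun b m t
      with hJdef
    set W : ℕ → ℂ := fun m =>
      (‖c‖ : ℂ) ^ (2 * σ) * c * ((J m : ℝ) : ℂ) * (hermiteFun b m x : ℂ) with hWdef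
    set ι : ℕ → ℂ := fun m => Complex.I * ((b * ((m : ℝ) - (n : ℝ)) : ℝ) : ℂ) with hιdef
    -- full expansion of the integrand
    have hExpand : ∀ θ : ℝ,
        U θ (fun t => (‖U (-θ) (fun t' => c * (hermiteFun b n t' : ℂ)) t‖ : ℂ) ^ (2 * σ) *
          U (-θ) (fun t' => c * (hermiteFun b n t' : ℂ)) t) x =
        ∑' m : ℕ, W m * Complex.exp (ι m * (θ : ℂ)) := by
      intro θ
      rw [hU]
      refine tsum_congr fun m => ?_
      simp only [hInner]
      rw [hD θ m ((‖c‖ : ℂ) ^ (2 * σ) *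
        (Complex.exp (Complex.I * ((-θ : ℝ) : ℂ) * ((b * ((n : ℝ) + 1 / 2) : ℝ) : ℂ)) * c))]
      have hee : Complex.exp (Complex.I * (θ : ℂ) * ((b * ((m : ℝ) + 1 / 2) : ℝ) : ℂ)) *
          Complex.exp (Complex.I * ((-θ : ℝ) : ℂ) * ((b * ((n : ℝ) + 1 / 2) : ℝ) : ℂ)) =
          Complex.exp (ι m * (θ : ℂ)) := by
        rw [← Complex.exp_add]
        congr 1
        rw [hιdef]
        push_cast
        ring
      rw [hWdef]
      linear_combination ((‖c‖ : ℂ) ^ (2 * σ) * c * ((J m : ℝ) : ℂ) *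
        (hermiteFun b m x : ℂ)) * hee
    -- summability of the coefficients
    have hWsum : Summable fun m => ‖W m‖ := by
      have h0 := (hsum x).mul_left (‖(‖c‖ : ℂ) ^ (2 * σ) * c‖)
      refine h0.congr fun m => ?_
      simp only [hWdef, hJdef, norm_mul, Complex.norm_real, Real.norm_eq_abs]
      ring
    -- interchange of sum and integral
    have hι0 : ∀ m, (ι m).re = 0 := by
      intro m
      simp [hιdef, Complex.mul_re]
    have hT : (0:ℝ) < 2 * Real.pi / b := by positivity
    have hswap := exp_swap_aux hT W ι hι0 hWsum
    rw [intervalIntegral.integral_congr (g := fun θ : ℝ => ∑' m : ℕ, W m *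
      Complex.exp (ι m * (θ : ℂ))) (fun θ _ => hExpand θ), hswap]
    -- evaluate the θ-integrals
    have htsum : (∑' m : ℕ, ∫ θ in (0:ℝ)..(2 * Real.pi / b), W m *
        Complex.exp (ι m * (θ : ℂ))) = ((2 * Real.pi / b : ℝ) : ℂ) * W n := by
      rw [tsum_eq_single n]
      · have hιn : ι n = 0 := by
          simp [hιdef]
        simp only [hιn, zero_mul, Complex.exp_zero, mul_one]
        rw [intervalIntegral.integral_const]
        rw [sub_zero, Complex.real_smul]
      · intro m hm
        rw [intervalIntegral.integral_const_mul, hιdef]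
        rw [exp_integral_ne hb hm, mul_zero]
    rw [htsum]
    -- final bookkeeping
    have hcoef : ((b / (2 * Real.pi) : ℝ) : ℂ) * ((2 * Real.pi / b : ℝ) : ℂ) = 1 := by
      rw [← Complex.ofReal_mul, show (b / (2 * Real.pi)) * (2 * Real.pi / b) = 1 by
        field_simp]
      simp
    rw [← mul_assoc, hcoef, one_mul]
    have hJn : J n = ∫ t : ℝ, hermiteFun b n t ^ (2 * σ + 2) := by
      rw [hJdef]
      refine congrArg _ (funext fun t => ?_)
      rw [← pow_succ]
    simp only [hWdef, hAdef]
    rw [hJn]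
    ring
  · -- condition 2 : orthogonal projection vanishes
    intro x
    have : (∫ t : ℝ, (hermiteFun b n t : ℂ) * (A * (hermiteFun b n t : ℂ))) = A := by
      have h1 : (fun t : ℝ => (hermiteFun b n t : ℂ) * (A * (hermiteFun b n t : ℂ))) =
          fun t => A * (((hermiteFun b n t * hermiteFun b n t : ℝ)) : ℂ) := by
        funext t; push_cast; ring
      have hOR : (∫ s : ℝ, ((hermiteFun b n s * hermiteFun b n s : ℝ) : ℂ)) =
          ((∫ s : ℝ, hermiteFun b n s * hermiteFun b n s : ℝ) : ℂ) := integral_ofReal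
      rw [h1, MeasureTheory.integral_const_mul, hOR,
        hermiteFun_orthonormal b hb n n, if_pos rfl]
      simp
    rw [this, sub_self]
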